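/- Let d ≥ 1 and let U₁, …, U_d be independent random variables uniformly distributed on [0,1]. Set X_i = cos(2πU_i) and X = (1/d)(X₁ + ⋯ + X_d). Then for every 0 ≤ δ ≤ 1, Prob(X > 1−δ) ≤ min( exp(−d(1−δ)²/2), (πeδ/4)^{d/2} ). -/

import Mathlib

open Real MeasureTheory
open scoped ENNReal

open Set

lemma my_lintegral_pi_pow {n : ℕ} (ν : Measure ℝ) [SigmaFinite ν] {f : ℝ → ℝ≥0∞}
    (hf : Measurable f) :
    ∫⁻ ω : Fin n → ℝ, ∏ i, f (ω i) ∂(Measure.pi fun _ : Fin n => ν)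
      = (∫⁻ x, f x ∂ν) ^ n := by
  induction n with
  | zero => simp
  | succ n ih =>
    have hmp := (measurePreserving_piFinSuccAbove (fun _ : Fin (n + 1) => ν) 0).symm
    have hg : Measurable fun ω : Fin (n + 1) → ℝ => ∏ i, f (ω i) :=
      Finset.measurable_prod _ fun i _ => hf.comp (measurable_pi_apply i)
    calc ∫⁻ ω : Fin (n+1) → ℝ, ∏ i, f (ω i) ∂(Measure.pi fun _ => ν)
        = ∫⁻ z : ℝ × (Fin n → ℝ), ∏ i, f (((MeasurableEquiv.piFinSuccAbove (fun _ => ℝ) 0).symm z) i)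
            ∂(ν.prod (Measure.pi fun _ : Fin n => ν)) := (hmp.lintegral_comp hg).symm
      _ = ∫⁻ z : ℝ × (Fin n → ℝ), f z.1 * ∏ i, f (z.2 i)
            ∂(ν.prod (Measure.pi fun _ : Fin n => ν)) := by
          congr 1; funext z
          simp [MeasurableEquiv.piFinSuccAbove_symm_apply, Fin.insertNthEquiv,
            Fin.prod_univ_succ, Fin.insertNth_zero, Fin.zero_succAbove]
      _ = (∫⁻ x, f x ∂ν) * (∫⁻ x, f x ∂ν) ^ n := by
          rw [lintegral_prod_mul (f := f) (g := fun y : Fin n → ℝ => ∏ i, f (y i))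
            hf.aemeasurable
            (Finset.measurable_prod _ fun i _ => hf.comp (measurable_pi_apply i)).aemeasurable, ih]
      _ = (∫⁻ x, f x ∂ν) ^ (n + 1) := (pow_succ' _ _).symm

lemma my_chernoff (d : ℕ) {t : ℝ} (ht : 0 ≤ t) (c : ℝ) (B : ℝ≥0∞)
    (hband : ∫⁻ x in Icc (0 : ℝ) 1, ENNReal.ofReal (exp (t * cos (2 * π * x))) ≤ B) :
    (Measure.pi fun _ : Fin d => volume.restrict (Icc (0 : ℝ) 1))
      {ω : Fin d → ℝ | c < ∑ i, cos (2 * π * ω i)}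
      ≤ ENNReal.ofReal (exp (-(t * c))) * B ^ d := by
  set μ := Measure.pi fun _ : Fin d => volume.restrict (Icc (0 : ℝ) 1)
  have hsum : Measurable fun ω : Fin d → ℝ => ∑ i, cos (2 * π * ω i) :=
    Finset.measurable_sum _ fun i _ =>
      (Real.continuous_cos.measurable).comp ((measurable_const.mul (measurable_pi_apply i)))
  have hS : MeasurableSet {ω : Fin d → ℝ | c < ∑ i, cos (2 * π * ω i)} :=
    measurableSet_lt measurable_const hsum
  have hf : Measurable fun x : ℝ => ENNReal.ofReal (exp (t * cos (2 * π * x))) := by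
    fun_prop
  calc μ {ω : Fin d → ℝ | c < ∑ i, cos (2 * π * ω i)}
      = ∫⁻ ω, {ω : Fin d → ℝ | c < ∑ i, cos (2 * π * ω i)}.indicator 1 ω ∂μ :=
        (lintegral_indicator_one hS).symm
    _ ≤ ∫⁻ ω, ENNReal.ofReal (exp (-(t * c))) * ∏ i, ENNReal.ofReal (exp (t * cos (2 * π * ω i))) ∂μ := by
        refine lintegral_mono fun ω => ?_
        have key : ENNReal.ofReal (exp (-(t * c))) * ∏ i, ENNReal.ofReal (exp (t * cos (2 * π * ω i)))
            = ENNReal.ofReal (exp (t * (∑ i, cos (2 * π * ω i)) - t * c)) := by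
          rw [← ENNReal.ofReal_prod_of_nonneg (fun i _ => (exp_pos _).le), ← Real.exp_sum,
            ← ENNReal.ofReal_mul (exp_pos _).le, ← Real.exp_add]
          congr 1
          rw [Finset.mul_sum, sub_eq_neg_add]
        rw [key]
        by_cases hω : ω ∈ {ω : Fin d → ℝ | c < ∑ i, cos (2 * π * ω i)}
        · rw [indicator_of_mem hω]
          simp only [Pi.one_apply]
          rw [show (1 : ℝ≥0∞) = ENNReal.ofReal 1 by simp]
          refine ENNReal.ofReal_le_ofReal (Real.one_le_exp ?_)
          have : c ≤ ∑ i, cos (2 * π * ω i) := le_of_lt hω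
          nlinarith
        · rw [indicator_of_notMem hω]; exact zero_le
    _ = ENNReal.ofReal (exp (-(t * c))) *
          (∫⁻ x, ENNReal.ofReal (exp (t * cos (2 * π * x))) ∂(volume.restrict (Icc (0:ℝ) 1))) ^ d := by
        have hprod : Measurable fun ω : Fin d → ℝ =>
            ∏ i, ENNReal.ofReal (exp (t * cos (2 * π * ω i))) :=
          Finset.measurable_prod _ fun i _ => hf.comp (measurable_pi_apply i)
        rw [lintegral_const_mul _ hprod, my_lintegral_pi_pow _ hf]
    _ ≤ ENNReal.ofReal (exp (-(t * c))) * B ^ d := by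
        gcongr

lemma my_exp_le_convex {t c : ℝ} (h1 : -1 ≤ c) (h2 : c ≤ 1) :
    exp (t * c) ≤ cosh t + c * sinh t := by
  have h := convexOn_exp.2 (Set.mem_univ t) (Set.mem_univ (-t))
    (show (0:ℝ) ≤ (1 + c) / 2 by linarith) (show (0:ℝ) ≤ (1 - c) / 2 by linarith)
    (show (1 + c) / 2 + (1 - c) / 2 = 1 by ring)
  simp only [smul_eq_mul] at h
  have harg : (1 + c) / 2 * t + (1 - c) / 2 * (-t) = t * c := by ring
  rw [harg] at h
  rw [Real.cosh_eq, Real.sinh_eq]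
  linarith

lemma my_band1 (t : ℝ) :
    ∫⁻ x in Icc (0 : ℝ) 1, ENNReal.ofReal (exp (t * cos (2 * π * x)))
      ≤ ENNReal.ofReal (cosh t) := by
  have hpt : ∀ x : ℝ, exp (t * cos (2 * π * x)) ≤ cosh t + cos (2 * π * x) * sinh t :=
    fun x => my_exp_le_convex (neg_one_le_cos _) (cos_le_one _)
  have hcont : Continuous fun x : ℝ => cosh t + cos (2 * π * x) * sinh t := by continuity
  have hInt : IntegrableOn (fun x : ℝ => cosh t + cos (2 * π * x) * sinh t) (Icc 0 1) volume :=
    hcont.integrableOn_Icc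
  have hnn : ∀ x : ℝ, 0 ≤ cosh t + cos (2 * π * x) * sinh t :=
    fun x => le_trans (exp_pos _).le (hpt x)
  calc ∫⁻ x in Icc (0 : ℝ) 1, ENNReal.ofReal (exp (t * cos (2 * π * x)))
      ≤ ∫⁻ x in Icc (0 : ℝ) 1, ENNReal.ofReal (cosh t + cos (2 * π * x) * sinh t) :=
        lintegral_mono fun x => ENNReal.ofReal_le_ofReal (hpt x)
    _ = ENNReal.ofReal (∫ x in Icc (0 : ℝ) 1, (cosh t + cos (2 * π * x) * sinh t)) :=
        (ofReal_integral_eq_lintegral_ofReal hInt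
          (Filter.Eventually.of_forall fun x => hnn x)).symm
    _ = ENNReal.ofReal (cosh t) := by
        have hcos : ∫ x in Icc (0 : ℝ) 1, cos (2 * π * x) = 0 := by
          rw [integral_Icc_eq_integral_Ioc,
            ← intervalIntegral.integral_of_le (zero_le_one (α := ℝ))]
          have h2π : (2 * π) ≠ 0 := by positivity
          rw [show (fun x : ℝ => cos (2 * π * x)) = fun x : ℝ => cos (2 * π * x) from rfl]
          have := intervalIntegral.integral_comp_mul_left (a := (0:ℝ)) (b := 1)
            (fun x => cos x) h2π
          rw [this]
          simp [Real.sin_two_pi]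
        have hInt2 : IntegrableOn (fun x : ℝ => cos (2 * π * x) * sinh t) (Icc 0 1) volume :=
          (Continuous.integrableOn_Icc (by continuity))
        rw [integral_add (integrableOn_const (μ := volume) (s := Icc (0:ℝ) 1) (C := cosh t)
          measure_Icc_lt_top.ne (by simp)) hInt2,
          integral_mul_const, hcos, zero_mul, add_zero, setIntegral_const]
        simp [Real.volume_Icc]

lemma my_one_sub_cos (y : ℝ) : 1 - cos (2 * y) = 2 * sin y ^ 2 := by
  have h := Real.sin_sq_add_cos_sq y
  have h2 := Real.cos_two_mul y
  nlinarith

lemma my_sin_lb {x : ℝ} (h0 : 0 ≤ x) (h1 : x ≤ 1/2) : 2 * x ≤ sin (π * x) := by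
  have h := Real.mul_le_sin (x := π * x) (by positivity)
    (by nlinarith [Real.pi_pos])
  have hπ : π ≠ 0 := Real.pi_ne_zero
  calc 2 * x = 2 / π * (π * x) := by field_simp
    _ ≤ sin (π * x) := h

lemma my_pointwise2 {s x : ℝ} (hs : 0 < s) (hx0 : 0 ≤ x) (hx1 : x ≤ 1) :
    exp (s * cos (2 * π * x))
      ≤ exp s * (exp (-(8 * s) * x ^ 2) + exp (-(8 * s) * (1 - x) ^ 2)) := by
  have hkey : ∀ y : ℝ, 0 ≤ y → y ≤ 1/2 → s * cos (2 * (π * y)) ≤ s - 8 * s * y ^ 2 := by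
    intro y hy0 hy1
    have h1 : 1 - cos (2 * (π * y)) = 2 * sin (π * y) ^ 2 := my_one_sub_cos (π * y)
    have h2 : 2 * y ≤ sin (π * y) := my_sin_lb hy0 hy1
    have h3 : (2 * y) * (2 * y) ≤ sin (π * y) * sin (π * y) :=
      mul_self_le_mul_self (by positivity) h2
    nlinarith [mul_le_mul_of_nonneg_left h3 hs.le]
  rcases le_or_gt x (1/2) with hx | hx
  · have := hkey x hx0 hx
    have h3 : exp (s * cos (2 * π * x)) ≤ exp s * exp (-(8 * s) * x ^ 2) := by
      rw [← Real.exp_add]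
      apply Real.exp_le_exp.2
      rw [mul_assoc] at this ⊢
      linarith
    nlinarith [Real.exp_pos (-(8 * s) * (1 - x) ^ 2), Real.exp_pos s]
  · have hy0 : (0:ℝ) ≤ 1 - x := by linarith
    have hy1 : 1 - x ≤ 1/2 := by linarith
    have := hkey (1 - x) hy0 hy1
    have hcs : cos (2 * (π * (1 - x))) = cos (2 * (π * x)) := by
      have he : 2 * (π * (1 - x)) = 2 * π - 2 * (π * x) := by ring
      rw [he]
      simp [Real.cos_two_pi_sub]
    rw [hcs] at this
    have h3 : exp (s * cos (2 * π * x)) ≤ exp s * exp (-(8 * s) * (1 - x) ^ 2) := by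
      rw [← Real.exp_add]
      apply Real.exp_le_exp.2
      rw [mul_assoc]
      linarith
    nlinarith [Real.exp_pos (-(8 * s) * x ^ 2), Real.exp_pos s]

lemma my_band2 {s : ℝ} (hs : 0 < s) :
    ∫⁻ x in Icc (0 : ℝ) 1, ENNReal.ofReal (exp (s * cos (2 * π * x)))
      ≤ ENNReal.ofReal (exp s * Real.sqrt (π / (8 * s))) := by
  have hc1 : Continuous fun x : ℝ => exp (-(8 * s) * x ^ 2) := by fun_prop
  have hc2 : Continuous fun x : ℝ => exp (-(8 * s) * (1 - x) ^ 2) := by fun_prop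
  have hgcont : Continuous fun x : ℝ =>
      exp s * (exp (-(8 * s) * x ^ 2) + exp (-(8 * s) * (1 - x) ^ 2)) := by fun_prop
  have hgnn : ∀ x : ℝ,
      0 ≤ exp s * (exp (-(8 * s) * x ^ 2) + exp (-(8 * s) * (1 - x) ^ 2)) := fun x => by
    positivity
  have hrefl : ∫ x in Icc (0 : ℝ) 1, exp (-(8 * s) * (1 - x) ^ 2)
      = ∫ x in Icc (0 : ℝ) 1, exp (-(8 * s) * x ^ 2) := by
    rw [integral_Icc_eq_integral_Ioc, integral_Icc_eq_integral_Ioc,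
      ← intervalIntegral.integral_of_le (zero_le_one (α := ℝ)),
      ← intervalIntegral.integral_of_le (zero_le_one (α := ℝ))]
    have := intervalIntegral.integral_comp_sub_left (a := (0:ℝ)) (b := 1)
      (fun x => exp (-(8 * s) * x ^ 2)) 1
    simpa using this
  have hIle : ∫ x in Icc (0 : ℝ) 1, exp (-(8 * s) * x ^ 2) ≤ Real.sqrt (π / (8 * s)) / 2 := by
    have hint : IntegrableOn (fun x : ℝ => exp (-(8 * s) * x ^ 2)) (Ici 0) volume :=
      (integrable_exp_neg_mul_sq (by positivity)).integrableOn
    calc ∫ x in Icc (0 : ℝ) 1, exp (-(8 * s) * x ^ 2)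
        ≤ ∫ x in Ici (0 : ℝ), exp (-(8 * s) * x ^ 2) :=
          setIntegral_mono_set hint
            (Filter.Eventually.of_forall fun x => (exp_pos _).le)
            (HasSubset.Subset.eventuallyLE Icc_subset_Ici_self)
      _ = Real.sqrt (π / (8 * s)) / 2 := by
          rw [integral_Ici_eq_integral_Ioi, integral_gaussian_Ioi]
  have hIcalc : ∫ x in Icc (0 : ℝ) 1,
      exp s * (exp (-(8 * s) * x ^ 2) + exp (-(8 * s) * (1 - x) ^ 2))
      ≤ exp s * Real.sqrt (π / (8 * s)) := by
    rw [MeasureTheory.integral_const_mul, integral_add hc1.integrableOn_Icc hc2.integrableOn_Icc, hrefl]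
    have := Real.exp_pos s
    nlinarith [hIle]
  calc ∫⁻ x in Icc (0 : ℝ) 1, ENNReal.ofReal (exp (s * cos (2 * π * x)))
      ≤ ∫⁻ x in Icc (0 : ℝ) 1, ENNReal.ofReal
          (exp s * (exp (-(8 * s) * x ^ 2) + exp (-(8 * s) * (1 - x) ^ 2))) := by
        apply setLIntegral_mono hgcont.measurable.ennreal_ofReal
        intro x hx
        exact ENNReal.ofReal_le_ofReal (my_pointwise2 hs hx.1 hx.2)
    _ = ENNReal.ofReal (∫ x in Icc (0 : ℝ) 1,
          exp s * (exp (-(8 * s) * x ^ 2) + exp (-(8 * s) * (1 - x) ^ 2))) :=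
        (ofReal_integral_eq_lintegral_ofReal hgcont.integrableOn_Icc
          (Filter.Eventually.of_forall hgnn)).symm
    _ ≤ ENNReal.ofReal (exp s * Real.sqrt (π / (8 * s))) := ENNReal.ofReal_le_ofReal hIcalc

theorem cosine_large_deviation_bound (d : ℕ) (hd : 1 ≤ d) (δ : ℝ) (hδ0 : 0 ≤ δ)
    (hδ1 : δ ≤ 1) :
    (Measure.pi fun _ : Fin d => volume.restrict (Set.Icc (0 : ℝ) 1))
        {ω : Fin d → ℝ | 1 - δ < (∑ i : Fin d, Real.cos (2 * π * ω i)) / d} ≤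
      ENNReal.ofReal
        (min (Real.exp (-(d : ℝ) * (1 - δ) ^ 2 / 2))
          ((π * Real.exp 1 * δ / 4) ^ ((d : ℝ) / 2))) := by
  have hd0 : (0 : ℝ) < d := by exact_mod_cast hd
  have hset : {ω : Fin d → ℝ | 1 - δ < (∑ i : Fin d, cos (2 * π * ω i)) / d}
      = {ω : Fin d → ℝ | (1 - δ) * d < ∑ i : Fin d, cos (2 * π * ω i)} := by
    ext ω
    simp only [mem_setOf_eq, lt_div_iff₀ hd0]
  rw [hset]
  set μ := Measure.pi fun _ : Fin d => volume.restrict (Icc (0 : ℝ) 1) with hμ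
  -- Bound 1
  have hbound1 : μ {ω : Fin d → ℝ | (1 - δ) * d < ∑ i : Fin d, cos (2 * π * ω i)}
      ≤ ENNReal.ofReal (exp (-(d : ℝ) * (1 - δ) ^ 2 / 2)) := by
    have ht : (0 : ℝ) ≤ 1 - δ := by linarith
    refine (my_chernoff d ht ((1 - δ) * d) _ (my_band1 (1 - δ))).trans ?_
    rw [← ENNReal.ofReal_pow (Real.cosh_pos _).le, ← ENNReal.ofReal_mul (exp_pos _).le]
    refine ENNReal.ofReal_le_ofReal ?_
    have h1 : cosh (1 - δ) ^ d ≤ exp ((1 - δ) ^ 2 / 2) ^ d :=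
      pow_le_pow_left₀ (Real.cosh_pos _).le (Real.cosh_le_exp_half_sq _) d
    calc exp (-((1 - δ) * ((1 - δ) * d))) * cosh (1 - δ) ^ d
        ≤ exp (-((1 - δ) * ((1 - δ) * d))) * exp ((1 - δ) ^ 2 / 2) ^ d :=
          mul_le_mul_of_nonneg_left h1 (exp_pos _).le
      _ = exp (-(d : ℝ) * (1 - δ) ^ 2 / 2) := by
          rw [← Real.exp_nat_mul, ← Real.exp_add]
          congr 1
          ring
  -- Bound 2
  have hbound2 : μ {ω : Fin d → ℝ | (1 - δ) * d < ∑ i : Fin d, cos (2 * π * ω i)}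
      ≤ ENNReal.ofReal ((π * Real.exp 1 * δ / 4) ^ ((d : ℝ) / 2)) := by
    rcases eq_or_lt_of_le hδ0 with hδ | hδ
    · -- δ = 0 : the set is empty
      have hempty : {ω : Fin d → ℝ | (1 - δ) * d < ∑ i : Fin d, cos (2 * π * ω i)} = ∅ := by
        ext ω
        simp only [mem_setOf_eq, mem_empty_iff_false, iff_false, not_lt, ← hδ]
        calc ∑ i : Fin d, cos (2 * π * ω i) ≤ ∑ _i : Fin d, (1 : ℝ) :=
              Finset.sum_le_sum fun i _ => cos_le_one _
          _ = (1 - 0) * d := by simp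
      rw [hempty]
      simp
    · -- δ > 0
      set s : ℝ := 1 / (2 * δ) with hs_def
      have hs : 0 < s := by positivity
      refine (my_chernoff d hs.le ((1 - δ) * d) _ (my_band2 hs)).trans ?_
      have hsqnn : (0 : ℝ) ≤ exp s * Real.sqrt (π / (8 * s)) := by positivity
      rw [← ENNReal.ofReal_pow hsqnn, ← ENNReal.ofReal_mul (exp_pos _).le]
      refine ENNReal.ofReal_le_ofReal (le_of_eq ?_)
      have hπδ : π / (8 * s) = π * δ / 4 := by
        rw [hs_def]
        field_simp
        ring
      have hsδ : s * δ = 1 / 2 := by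
        rw [hs_def]
        field_simp
      have hπδnn : (0 : ℝ) ≤ π * δ / 4 := by positivity
      rw [hπδ, mul_pow, ← mul_assoc]
      have h1 : exp (-(s * ((1 - δ) * d))) * exp s ^ d = exp ((d : ℝ) / 2) := by
        rw [← Real.exp_nat_mul, ← Real.exp_add]
        congr 1
        have : -(s * ((1 - δ) * d)) + (d : ℝ) * s = (s * δ) * d := by ring
        rw [this, hsδ]
        ring
      have h2 : Real.sqrt (π * δ / 4) ^ d = (π * δ / 4) ^ ((d : ℝ) / 2) := by
        rw [Real.sqrt_eq_rpow, ← Real.rpow_natCast ((π * δ / 4) ^ (1 / (2:ℝ))) d,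
          ← Real.rpow_mul hπδnn]
        congr 1
        ring
      rw [h1, h2, ← Real.exp_one_rpow ((d : ℝ) / 2),
        ← Real.mul_rpow (exp_pos 1).le hπδnn]
      congr 1
      ring
  rcases min_cases (Real.exp (-(d : ℝ) * (1 - δ) ^ 2 / 2))
      ((π * Real.exp 1 * δ / 4) ^ ((d : ℝ) / 2)) with ⟨h, _⟩ | ⟨h, _⟩ <;> rw [h]
  · exact hbound1
  · exact hbound2
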